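/- For every R > 0 there exist a radius R' > R + 1, a constant C ∈ ℝ, and a smooth function f : ℝ^n → ℝ such that: f(x) = −√(1 + ‖x‖^2) for all x with ‖x‖ ≤ R + 1; f(x) = C for all x with ‖x‖ ≥ R'; and ‖∇f(x)‖ < 1 for all x ∈ ℝ^n (so that the graph {(f(x), x) : x ∈ ℝ^n} is a spacelike hypersurface in (n+1)-dimensional Minkowski space-time which coincides with the lower unit hyperboloid for ‖x‖ ≤ R+1 and with a horizontal hyperplane near infinity). -/

import Mathlib

open Real intervalIntegral
open scoped ContDiff

noncomputable def SIchi (b : ℝ) : ℝ → ℝ := fun t => Real.smoothTransition (b - t)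

lemma SIchi_contDiff (b : ℝ) {n : ℕ∞} : ContDiff ℝ n (SIchi b) := by
  unfold SIchi
  exact Real.smoothTransition.contDiff.comp (contDiff_const.sub contDiff_id)

lemma SIchi_nonneg (b t : ℝ) : 0 ≤ SIchi b t := Real.smoothTransition.nonneg _
lemma SIchi_le_one (b t : ℝ) : SIchi b t ≤ 1 := Real.smoothTransition.le_one _
lemma SIchi_eq_one {b t : ℝ} (h : t ≤ b - 1) : SIchi b t = 1 :=
  Real.smoothTransition.one_of_one_le (by linarith)
lemma SIchi_eq_zero {b t : ℝ} (h : b ≤ t) : SIchi b t = 0 :=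
  Real.smoothTransition.zero_of_nonpos (by linarith)

noncomputable def SIG (a : ℝ) : ℝ → ℝ := fun v => -a - ∫ t in a..v, SIchi (a + 1) t

lemma SIG_hasDerivAt (a v : ℝ) : HasDerivAt (SIG a) (-(SIchi (a+1) v)) v := by
  have h := ((SIchi_contDiff (a+1) (n := 0)).continuous.integral_hasStrictDerivAt a v).hasDerivAt
  have h2 := (hasDerivAt_const v (-a)).sub h
  simp only [zero_sub] at h2
  exact h2

lemma SIG_contDiff (a : ℝ) : ContDiff ℝ (⊤ : ℕ∞) (SIG a) := by
  have hd : deriv (SIG a) = fun v => -(SIchi (a+1) v) :=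
    funext fun v => (SIG_hasDerivAt a v).deriv
  have : ContDiff ℝ ∞ (SIG a) := by
    rw [contDiff_infty_iff_deriv]
    exact ⟨fun v => (SIG_hasDerivAt a v).differentiableAt, by
      rw [hd]; exact (SIchi_contDiff (a+1)).neg⟩
  exact this

lemma SIG_eq_low {a v : ℝ} (h : v ≤ a) : SIG a v = -v := by
  have : (∫ t in a..v, SIchi (a+1) t) = ∫ t in a..v, (1:ℝ) := by
    apply intervalIntegral.integral_congr
    intro t ht
    rw [Set.uIcc_of_ge h] at ht
    exact SIchi_eq_one (by simpa using ht.2)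
  simp [SIG, this]
  ring

lemma SIG_eq_high {a v : ℝ} (h : a + 1 ≤ v) : SIG a v = SIG a (a+1) := by
  have hint : ∀ u w : ℝ, IntervalIntegrable (SIchi (a+1)) MeasureTheory.volume u w :=
    fun u w => ((SIchi_contDiff (a+1) (n := 0)).continuous).intervalIntegrable u w
  have key : (∫ t in a..v, SIchi (a+1) t) - ∫ t in a..(a+1), SIchi (a+1) t
      = ∫ t in (a+1)..v, SIchi (a+1) t :=
    intervalIntegral.integral_interval_sub_left (hint a v) (hint a (a+1))
  have hz : (∫ t in (a+1)..v, SIchi (a+1) t) = ∫ t in (a+1)..v, (0:ℝ) := by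
    apply intervalIntegral.integral_congr
    intro t ht
    rw [Set.uIcc_of_le h] at ht
    exact SIchi_eq_zero ht.1
  simp at hz
  have : (∫ t in a..v, SIchi (a+1) t) = ∫ t in a..(a+1), SIchi (a+1) t := by
    rw [hz] at key; linarith
  simp [SIG, this]

/-- For every `R > 0` there are `R' > R + 1`, a constant `C` and a smooth function
`f : ℝⁿ → ℝ` with `f(x) = −√(1 + ‖x‖²)` for `‖x‖ ≤ R + 1`, `f ≡ C` for `‖x‖ ≥ R'`,
and `‖∇f‖ < 1` everywhere — so the graph of `f` is a spacelike hypersurface in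
Minkowski space-time coinciding with the lower unit hyperboloid for `‖x‖ ≤ R + 1`
and with a horizontal hyperplane near infinity. -/
theorem spacelike_interpolation (n : ℕ) (hn : 3 ≤ n) (R : ℝ) (hR : 0 < R) :
    ∃ (R' C : ℝ) (f : EuclideanSpace ℝ (Fin n) → ℝ),
      R + 1 < R' ∧
      ContDiff ℝ (⊤ : ℕ∞) f ∧
      (∀ x : EuclideanSpace ℝ (Fin n), ‖x‖ ≤ R + 1 → f x = -Real.sqrt (1 + ‖x‖ ^ 2)) ∧
      (∀ x : EuclideanSpace ℝ (Fin n), R' ≤ ‖x‖ → f x = C) ∧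
      (∀ x : EuclideanSpace ℝ (Fin n), ‖gradient f x‖ < 1) := by
  set a : ℝ := Real.sqrt (1 + (R+1)^2) with ha
  have haR : R + 1 ≤ a := by
    rw [ha]
    nlinarith [Real.sq_sqrt (by positivity : (0:ℝ) ≤ 1 + (R+1)^2),
      Real.sqrt_nonneg (1 + (R+1)^2)]
  set ρ : EuclideanSpace ℝ (Fin n) → ℝ := fun x => Real.sqrt (1 + ‖x‖^2) with hρ
  have hρpos : ∀ x : EuclideanSpace ℝ (Fin n), 0 < 1 + ‖x‖^2 := fun x => by positivity
  have hρx : ∀ x : EuclideanSpace ℝ (Fin n), ‖x‖ < ρ x := by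
    intro x
    rw [hρ]
    exact (Real.lt_sqrt (norm_nonneg x)).2 (by nlinarith)
  -- derivative of ρ
  have hq : ∀ x : EuclideanSpace ℝ (Fin n),
      HasFDerivAt (fun y : EuclideanSpace ℝ (Fin n) => 1 + ‖y‖^2)
        ((2:ℝ) • (innerSL ℝ x)) x := by
    intro x
    have h1 : HasFDerivAt (fun y : EuclideanSpace ℝ (Fin n) => ‖y‖^2)
        ((2:ℝ) • (innerSL ℝ x)) x := by
      have := (hasStrictFDerivAt_norm_sq x).hasFDerivAt
      convert this using 1
      ext y
      simp [two_smul]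
      rw [two_smul, two_smul]
    simpa using h1
  have hρd : ∀ x : EuclideanSpace ℝ (Fin n),
      HasFDerivAt ρ ((1 / (2 * ρ x)) • ((2:ℝ) • (innerSL ℝ x))) x := by
    intro x
    exact (hq x).sqrt (ne_of_gt (hρpos x))
  have hρsmooth : ContDiff ℝ (⊤ : ℕ∞) ρ := by
    rw [contDiff_iff_contDiffAt]
    intro x
    exact (Real.contDiffAt_sqrt (ne_of_gt (hρpos x))).comp x
      ((contDiff_const.add (contDiff_norm_sq ℝ)).contDiffAt)
  refine ⟨a + 1, SIG a (a+1), fun x => SIG a (ρ x), by linarith, ?_, ?_, ?_, ?_⟩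
  · exact (SIG_contDiff a).comp hρsmooth
  · intro x hx
    have : ρ x ≤ a := by
      rw [hρ, ha]
      exact Real.sqrt_le_sqrt (by nlinarith [norm_nonneg x])
    exact SIG_eq_low this
  · intro x hx
    have : a + 1 ≤ ρ x := le_trans hx (le_of_lt (hρx x))
    exact SIG_eq_high this
  · intro x
    have hf : HasFDerivAt (fun x => SIG a (ρ x))
        ((-(SIchi (a+1) (ρ x))) • ((1 / (2 * ρ x)) • ((2:ℝ) • (innerSL ℝ x)))) x :=
      (SIG_hasDerivAt a (ρ x)).comp_hasFDerivAt x (hρd x)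
    have hgrad : ‖gradient (fun x => SIG a (ρ x)) x‖
        = ‖fderiv ℝ (fun x => SIG a (ρ x)) x‖ :=
      LinearIsometryEquiv.norm_map _ _
    rw [hgrad, hf.fderiv]
    have hρ0 : 0 < ρ x := Real.sqrt_pos.2 (hρpos x)
    rw [norm_smul, norm_smul, norm_smul, innerSL_apply_norm]
    have hb : |(-(SIchi (a+1) (ρ x)))| ≤ 1 := by
      rw [abs_neg, abs_of_nonneg (SIchi_nonneg _ _)]
      exact SIchi_le_one _ _
    have h2 : ‖(1:ℝ) / (2 * ρ x)‖ * (‖(2:ℝ)‖ * ‖x‖) = ‖x‖ / ρ x := by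
      rw [Real.norm_eq_abs, Real.norm_eq_abs, abs_of_pos (by positivity),
        abs_of_pos (by norm_num : (0:ℝ) < 2)]
      field_simp
    rw [h2]
    have hlt : ‖x‖ / ρ x < 1 := (div_lt_one hρ0).2 (hρx x)
    calc ‖(-(SIchi (a+1) (ρ x)))‖ * (‖x‖ / ρ x) ≤ 1 * (‖x‖ / ρ x) := by
          apply mul_le_mul_of_nonneg_right _ (by positivity)
          rw [Real.norm_eq_abs]; exact hb
      _ = ‖x‖ / ρ x := one_mul _
      _ < 1 := hlt
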